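/- Second-order structure of a (1, μ1)-proper variable (ℂ^{μ1}-properness of Vía et al.): let μ1, μ2 be orthogonal pure unit quaternions, and let Q be a square-integrable quaternion random variable on (Ω, P) whose law is invariant under right Clifford translation q ↦ q·μ1 (i.e. the law of ω ↦ Q(ω)·μ1 equals the law of Q). Let Z1 := (Q − μ1·Q·μ1)/2 and Z2 := −((Q + μ1·Q·μ1)/2)·μ2 be its Cayley–Dickson components, taking values in ℂ_{μ1} = span_ℝ{1, μ1}. Then Z1 and Z2 are proper complex variables that are uncorrelated: E[Z1²] = 0, E[Z2²] = 0, and E[Z1·star(Z2)] = 0. -/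

import Mathlib

open Quaternion MeasureTheory

/-- Equip the quaternions with their Borel σ-algebra. -/
noncomputable instance : MeasurableSpace ℍ[ℝ] := borel ℍ[ℝ]
instance : BorelSpace ℍ[ℝ] := ⟨rfl⟩

theorem aux_sq1 {R : Type*} [Ring R] (a m : R) (hm : m * m = -1) (hc : m * a = a * m) :
    a * m * (a * m) = -(a * a) := by
  rw [mul_assoc, ← mul_assoc m a m, hc, mul_assoc a m m, hm, mul_neg_one, mul_neg]

theorem aux_sq2 {R : Type*} [Ring R] (b m n : R) (hm : m * m = -1) (hmn : m * n = -(n * m))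
    (hmb : m * b = -(b * m)) :
    b * m * n * (b * m * n) = -(b * n * (b * n)) := by
  have hmn' : ∀ x : R, m * (n * x) = -(n * (m * x)) := fun x => by
    rw [← mul_assoc, hmn, neg_mul, mul_assoc]
  have hmb' : ∀ x : R, m * (b * x) = -(b * (m * x)) := fun x => by
    rw [← mul_assoc, hmb, neg_mul, mul_assoc]
  have hm' : ∀ x : R, m * (m * x) = -x := fun x => by
    rw [← mul_assoc, hm, neg_one_mul]
  calc b * m * n * (b * m * n) = b * (m * (n * (b * (m * n)))) := by
        simp only [mul_assoc]
    _ = -(b * n * (b * n)) := by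
        rw [hmn' (b * (m * n)), hmb' (m * n), hm' n]
        simp only [mul_neg, neg_neg, mul_assoc]

theorem aux_cross {R : Type*} [Ring R] (a s m n : R) (hm : m * m = -1)
    (hmn : m * n = -(n * m)) :
    a * m * (n * (m * s)) = a * (n * s) := by
  have hmn' : ∀ x : R, m * (n * x) = -(n * (m * x)) := fun x => by
    rw [← mul_assoc, hmn, neg_mul, mul_assoc]
  have hm' : ∀ x : R, m * (m * x) = -x := fun x => by
    rw [← mul_assoc, hm, neg_one_mul]
  rw [mul_assoc, hmn' (m * s), hm' s]
  simp only [mul_neg, neg_neg]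

theorem aux_half (x : ℍ[ℝ]) : x / 2 = (2⁻¹ : ℝ) • x := by
  have h2 : (2 : ℍ[ℝ]) = ((2 : ℝ) : ℍ[ℝ]) := by norm_cast
  have hinv : ((2 : ℝ) : ℍ[ℝ])⁻¹ = ((2⁻¹ : ℝ) : ℍ[ℝ]) := by
    refine (eq_inv_of_mul_eq_one_left ?_).symm
    rw [← Quaternion.coe_mul]; norm_num
  rw [div_eq_mul_inv, h2, hinv, Quaternion.mul_coe_eq_smul]

theorem aux_pure_sq (μ : ℍ[ℝ]) (hre : μ.re = 0) (h : ‖μ‖ = 1) : μ * μ = -1 := by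
  have hs : star μ = -μ := by ext <;> simp [hre]
  have h2 := Quaternion.self_mul_star μ
  have hn : (normSq μ : ℝ) = 1 := by
    have := Quaternion.normSq_eq_norm_mul_self μ
    rw [h] at this; simpa using this
  rw [hs, mul_neg, hn] at h2
  have h3 : -(μ * μ) = 1 := by simpa using h2
  rw [← h3, neg_neg]

theorem aux_anticomm (μ1 μ2 : ℍ[ℝ]) (h1 : μ1.re = 0) (h2 : μ2.re = 0)
    (h : (μ1 * μ2).re = 0) : μ1 * μ2 = -(μ2 * μ1) := by
  ext <;>
    simp_all [Quaternion.re_mul, Quaternion.imI_mul, Quaternion.imJ_mul,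
      Quaternion.imK_mul] <;>
    linarith

theorem P1 (a m : ℍ[ℝ]) (hm : m * m = -1) (hc : m * a = a * m) :
    ((a * m) / 2) ^ 2 = -((a / 2) ^ 2) := by
  rw [aux_half, aux_half, smul_pow, smul_pow, sq (a * m), sq a, aux_sq1 a m hm hc, smul_neg]

theorem P2 (b m n : ℍ[ℝ]) (hm : m * m = -1) (hmn : m * n = -(n * m))
    (hmb : m * b = -(b * m)) :
    (-((b * m) / 2) * n) ^ 2 = -((-(b / 2) * n) ^ 2) := by
  rw [aux_half, aux_half]
  simp only [neg_mul, neg_sq, smul_mul_assoc]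
  rw [smul_pow, smul_pow, sq (b * m * n), sq (b * n), aux_sq2 b m n hm hmn hmb, smul_neg]

theorem P3 (a b m n : ℍ[ℝ]) (hm : m * m = -1) (hmn : m * n = -(n * m))
    (hsm : star m = -m) (hsn : star n = -n) :
    ((a * m) / 2) * star (-((b * m) / 2) * n) = -((a / 2) * star (-(b / 2) * n)) := by
  simp only [aux_half]
  simp only [star_mul, star_neg, Quaternion.star_smul, hsm, hsn, neg_mul, mul_neg,
    neg_neg, smul_mul_assoc, mul_smul_comm, smul_neg, smul_smul]
  rw [aux_cross a (star b) m n hm hmn]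

/-- Second-order structure of a `(1, μ1)`-proper quaternion random variable
(invariant under the right Clifford translation `q ↦ q·μ1`): its Cayley–Dickson
components are proper and uncorrelated:
`E[Z1²] = 0`, `E[Z2²] = 0` and `E[Z1·star(Z2)] = 0`. -/
theorem second_order_structure_one_mu1_proper
    {Ω : Type*} [MeasurableSpace Ω] (P : Measure Ω) [IsProbabilityMeasure P]
    (μ1 μ2 : ℍ[ℝ]) (h1re : μ1.re = 0) (h1 : ‖μ1‖ = 1)
    (h2re : μ2.re = 0) (h2 : ‖μ2‖ = 1) (horth : (μ1 * μ2).re = 0)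
    (Q : Ω → ℍ[ℝ]) (hQmeas : Measurable Q) (hQ : MemLp Q 2 P)
    (hprop : Measure.map (fun ω => Q ω * μ1) P = Measure.map Q P)
    (Z1 Z2 : Ω → ℍ[ℝ])
    (hZ1 : ∀ ω, Z1 ω = (Q ω - μ1 * Q ω * μ1) / 2)
    (hZ2 : ∀ ω, Z2 ω = -((Q ω + μ1 * Q ω * μ1) / 2) * μ2) :
    (∫ ω, Z1 ω ^ 2 ∂P) = 0 ∧
    (∫ ω, Z2 ω ^ 2 ∂P) = 0 ∧
    (∫ ω, Z1 ω * star (Z2 ω) ∂P) = 0 := by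
  have hm : μ1 * μ1 = -1 := aux_pure_sq μ1 h1re h1
  have hmn : μ1 * μ2 = -(μ2 * μ1) := aux_anticomm μ1 μ2 h1re h2re horth
  have hsm : star μ1 = -μ1 := by ext <;> simp [h1re]
  have hsn : star μ2 = -μ2 := by ext <;> simp [h2re]
  have hm' : ∀ x : ℍ[ℝ], μ1 * (μ1 * x) = -x := fun x => by
    rw [← mul_assoc, hm, neg_one_mul]
  -- commutation / anticommutation of the Cayley–Dickson components with μ1
  have e1 : ∀ q : ℍ[ℝ], μ1 * (μ1 * q * μ1) = -(q * μ1) := fun q => by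
    rw [mul_assoc μ1 q μ1, hm' (q * μ1)]
  have e2 : ∀ q : ℍ[ℝ], μ1 * q * μ1 * μ1 = -(μ1 * q) := fun q => by
    rw [mul_assoc (μ1 * q) μ1 μ1, hm, mul_neg_one]
  have hma : ∀ q : ℍ[ℝ], μ1 * (q - μ1 * q * μ1) = (q - μ1 * q * μ1) * μ1 := by
    intro q
    rw [mul_sub, sub_mul, e1 q, e2 q]
    abel
  have hmb : ∀ q : ℍ[ℝ], μ1 * (q + μ1 * q * μ1) = -((q + μ1 * q * μ1) * μ1) := by
    intro q
    rw [mul_add, add_mul, e1 q, e2 q, neg_add]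
    abel
  -- the key distributional invariance for integrals of continuous functions
  have key : ∀ g : ℍ[ℝ] → ℍ[ℝ], Continuous g →
      ∫ ω, g (Q ω * μ1) ∂P = ∫ ω, g (Q ω) ∂P := by
    intro g hg
    have hmeas : Measurable fun ω => Q ω * μ1 := hQmeas.mul_const μ1
    rw [← integral_map hmeas.aemeasurable hg.aestronglyMeasurable, hprop,
      integral_map hQmeas.aemeasurable hg.aestronglyMeasurable]
  have zero_of : ∀ g : ℍ[ℝ] → ℍ[ℝ], Continuous g → (∀ q, g (q * μ1) = -(g q)) →
      ∫ ω, g (Q ω) ∂P = 0 := by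
    intro g hg hneg
    have hIn : ∫ ω, g (Q ω) ∂P = -∫ ω, g (Q ω) ∂P := by
      conv_lhs => rw [← key g hg]
      simp only [hneg]
      rw [integral_neg]
    have hsum : (∫ ω, g (Q ω) ∂P) + (∫ ω, g (Q ω) ∂P) = 0 :=
      eq_neg_iff_add_eq_zero.mp hIn
    have h2I : (2 : ℝ) • (∫ ω, g (Q ω) ∂P) = 0 := by rw [two_smul]; exact hsum
    have := smul_eq_zero.mp h2I
    simpa using this.resolve_left (by norm_num)
  refine ⟨?_, ?_, ?_⟩
  · have := zero_of (fun q => ((q - μ1 * q * μ1) / 2) ^ 2) (by fun_prop)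
      (fun q => by
        have ha : q * μ1 - μ1 * (q * μ1) * μ1 = (q - μ1 * q * μ1) * μ1 := by noncomm_ring
        simp only [ha]
        exact P1 _ μ1 hm (hma q))
    rw [← this]
    simp only [hZ1]
  · have := zero_of (fun q => (-((q + μ1 * q * μ1) / 2) * μ2) ^ 2) (by fun_prop)
      (fun q => by
        have hb : q * μ1 + μ1 * (q * μ1) * μ1 = (q + μ1 * q * μ1) * μ1 := by noncomm_ring
        simp only [hb]
        exact P2 _ μ1 μ2 hm hmn (hmb q))
    rw [← this]
    simp only [hZ2]
  · have := zero_of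
      (fun q => ((q - μ1 * q * μ1) / 2) * star (-((q + μ1 * q * μ1) / 2) * μ2))
      (by fun_prop)
      (fun q => by
        have ha : q * μ1 - μ1 * (q * μ1) * μ1 = (q - μ1 * q * μ1) * μ1 := by noncomm_ring
        have hb : q * μ1 + μ1 * (q * μ1) * μ1 = (q + μ1 * q * μ1) * μ1 := by noncomm_ring
        simp only [ha, hb]
        exact P3 _ _ μ1 μ2 hm hmn hsm hsn)
    rw [← this]
    simp only [hZ1, hZ2]
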